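/- Let d ≥ 1 and let n > d be an integer. There exists a constant C > 0, depending only on n and d, such that for every t ∈ ℝ, every integer k ≥ 1, and every x ∈ ℝ^d, the k-fold convolution satisfies G_{n,t}^{∗k}(x) ≤ C^(k−1) · ⟨t⟩^((k−1)·d) · G_{n,t}(|x|), where G_{n,t}^{∗1} := G_{n,t}(|·|) and G_{n,t}^{∗(k+1)} := G_{n,t}^{∗k} ∗ G_{n,t}(|·|). -/

import Mathlib

open MeasureTheory

/-- The polynomially decaying function `G_{n,t}(r) = min(1, ⟨t⟩ⁿ/rⁿ)` (with value `1` at `r = 0`). -/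
noncomputable def G (n : ℕ) (t r : ℝ) : ℝ :=
  if r = 0 then 1 else min 1 (Real.sqrt (1 + t^2) ^ n / r ^ n)

/-- `iterConv d n t k` is the `(k+1)`-fold convolution `G_{n,t}^{∗(k+1)}`, i.e.
`iterConv d n t 0 = G_{n,t}(|·|)` and `iterConv d n t (k+1) = (iterConv d n t k) ∗ G_{n,t}(|·|)`. -/
noncomputable def iterConv (d n : ℕ) (t : ℝ) : ℕ → EuclideanSpace ℝ (Fin d) → ℝ
  | 0 => fun x => G n t ‖x‖
  | (k + 1) => fun x => ∫ y, iterConv d n t k y * G n t ‖x - y‖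

section helpers

lemma one_le_sqt (t : ℝ) : 1 ≤ Real.sqrt (1 + t^2) := by
  have h := Real.sqrt_le_sqrt (show (1:ℝ) ≤ 1 + t^2 by nlinarith [sq_nonneg t])
  simpa using h

lemma sqt_pos (t : ℝ) : 0 < Real.sqrt (1 + t^2) :=
  lt_of_lt_of_le one_pos (one_le_sqt t)

lemma G_nonneg (n : ℕ) (t : ℝ) {r : ℝ} (hr : 0 ≤ r) : 0 ≤ G n t r := by
  unfold G
  split
  · norm_num
  · rcases lt_or_eq_of_le hr with h | h
    · exact le_min (by norm_num) (by positivity)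
    · exact absurd h.symm (by assumption)

lemma G_le_one (n : ℕ) (t r : ℝ) : G n t r ≤ 1 := by
  unfold G
  split
  · exact le_refl _
  · exact min_le_left _ _

lemma G_anti (n : ℕ) (t : ℝ) {r s : ℝ} (hr : 0 < r) (hrs : r ≤ s) : G n t s ≤ G n t r := by
  have hs : 0 < s := lt_of_lt_of_le hr hrs
  unfold G
  rw [if_neg (ne_of_gt hr), if_neg (ne_of_gt hs)]
  refine min_le_min le_rfl ?_
  apply div_le_div_of_nonneg_left (by positivity) (by positivity)
  exact pow_le_pow_left₀ (le_of_lt hr) hrs n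

/-- From `‖x‖/2 ≤ r`: `G n t r ≤ 2^n * G n t ‖x‖`. -/
lemma G_half (n : ℕ) (t : ℝ) {c r : ℝ} (hc : 0 ≤ c) (h : c / 2 ≤ r) :
    G n t r ≤ 2 ^ n * G n t c := by
  rcases eq_or_lt_of_le hc with h0 | h0
  · -- c = 0
    have h1 : G n t r ≤ 1 := G_le_one n t r
    have h2 : G n t c = 1 := by rw [← h0]; unfold G; simp
    rw [h2, mul_one]
    calc G n t r ≤ 1 := h1
    _ ≤ 2 ^ n := one_le_pow₀ (by norm_num)
  · have hc2 : (0:ℝ) < c / 2 := by linarith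
    have step1 : G n t r ≤ G n t (c / 2) := G_anti n t hc2 h
    refine le_trans step1 ?_
    unfold G
    rw [if_neg (ne_of_gt hc2), if_neg (ne_of_gt h0)]
    have hpow : (c/2) ^ n = c ^ n / 2 ^ n := div_pow c 2 n
    have : Real.sqrt (1 + t^2) ^ n / (c/2) ^ n = 2 ^ n * (Real.sqrt (1 + t^2) ^ n / c ^ n) := by
      rw [hpow]
      field_simp
    rw [this]
    have hmin : (2:ℝ) ^ n * min 1 (Real.sqrt (1 + t^2) ^ n / c ^ n)
        = min ((2:ℝ)^n * 1) ((2:ℝ)^n * (Real.sqrt (1 + t^2) ^ n / c ^ n)) :=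
      mul_min_of_nonneg _ _ (by positivity)
    rw [hmin]
    exact min_le_min (by simpa using one_le_pow₀ (by norm_num : (1:ℝ) ≤ 2)) le_rfl

end helpers

section measure

open Module

variable {d n : ℕ} {t : ℝ}

lemma G_meas (d n : ℕ) (t : ℝ) :
    Measurable (fun x : EuclideanSpace ℝ (Fin d) => G n t ‖x‖) := by
  unfold G
  refine Measurable.ite ?_ measurable_const ?_
  · exact measurable_norm (measurableSet_singleton (0:ℝ))
  · exact measurable_const.min (measurable_const.div ((measurable_norm).pow_const n))

lemma finrank_eucl (d : ℕ) : finrank ℝ (EuclideanSpace ℝ (Fin d)) = d := by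
  simp [finrank_euclideanSpace]

lemma G_le_decay (n : ℕ) (hd1 : 1 ≤ n) (t : ℝ) {r : ℝ} (hr : 0 ≤ r) :
    G n t r ≤ (2 * Real.sqrt (1 + t^2)) ^ n * ((1 + r) ^ (-(n:ℝ))) := by
  set a := Real.sqrt (1 + t^2) with ha
  have ha1 : 1 ≤ a := one_le_sqt t
  have h1r : (0:ℝ) < 1 + r := by linarith
  have hrpow : (1 + r) ^ (-(n:ℝ)) = ((1 + r) ^ n)⁻¹ := by
    rw [Real.rpow_neg (le_of_lt h1r), Real.rpow_natCast]
  rw [hrpow]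
  have key : G n t r * (1 + r) ^ n ≤ (2 * a) ^ n := by
    rcases eq_or_lt_of_le hr with h0 | h0
    · -- r = 0
      have : G n t r = 1 := by rw [← h0]; unfold G; simp
      rw [this, one_mul, ← h0]
      norm_num
      exact one_le_pow₀ (by linarith)
    · unfold G
      rw [if_neg (ne_of_gt h0)]
      rcases le_or_gt r 1 with h1 | h1
      · calc min 1 (a ^ n / r ^ n) * (1 + r) ^ n ≤ 1 * (1 + r) ^ n := by
              apply mul_le_mul_of_nonneg_right (min_le_left _ _) (by positivity)
          _ = (1 + r) ^ n := one_mul _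
          _ ≤ (2 * a) ^ n := by
              apply pow_le_pow_left₀ (by linarith) (by linarith)
      · calc min 1 (a ^ n / r ^ n) * (1 + r) ^ n ≤ (a ^ n / r ^ n) * (1 + r) ^ n := by
              apply mul_le_mul_of_nonneg_right (min_le_right _ _) (by positivity)
          _ ≤ (a ^ n / r ^ n) * (2 * r) ^ n := by
              apply mul_le_mul_of_nonneg_left (pow_le_pow_left₀ (by linarith) (by linarith) n)
                (by positivity)
          _ = (2 * a) ^ n := by
              rw [mul_pow, mul_pow]
              field_simp
  calc G n t r = G n t r * (1 + r) ^ n * ((1 + r) ^ n)⁻¹ := by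
        field_simp
    _ ≤ (2 * a) ^ n * ((1 + r) ^ n)⁻¹ := by
        apply mul_le_mul_of_nonneg_right key (by positivity)

lemma G_integrable (d n : ℕ) (hd : 1 ≤ d) (hn : d < n) (t : ℝ) :
    Integrable (fun x : EuclideanSpace ℝ (Fin d) => G n t ‖x‖) := by
  have hnr : (finrank ℝ (EuclideanSpace ℝ (Fin d)) : ℝ) < (n : ℝ) := by
    rw [finrank_eucl]
    exact_mod_cast hn
  have hint := (integrable_one_add_norm (μ := (volume : Measure (EuclideanSpace ℝ (Fin d))))
    hnr).const_mul ((2 * Real.sqrt (1 + t^2)) ^ n)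
  refine hint.mono ((G_meas d n t).aestronglyMeasurable) ?_
  filter_upwards with x
  have h1 : 0 ≤ G n t ‖x‖ := G_nonneg n t (norm_nonneg x)
  have h2 := G_le_decay n (le_trans hd (le_of_lt hn)) t (norm_nonneg x)
  rw [Real.norm_eq_abs, abs_of_nonneg h1, Real.norm_eq_abs]
  refine le_trans h2 (le_abs_self _)

lemma G_scale (n : ℕ) (t r : ℝ) : G n t r = G n 0 (r / Real.sqrt (1 + t^2)) := by
  set a := Real.sqrt (1 + t^2) with ha
  have ha0 : 0 < a := sqt_pos t
  rcases eq_or_ne r 0 with rfl | hr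
  · unfold G; simp
  · have hra : r / a ≠ 0 := div_ne_zero hr (ne_of_gt ha0)
    unfold G
    rw [if_neg hr, if_neg hra]
    have hs1 : Real.sqrt (1 + (0:ℝ)^2) = 1 := by norm_num
    rw [hs1, one_pow, div_pow, one_div_div]

lemma G_integral_eq (d n : ℕ) (t : ℝ) :
    ∫ x : EuclideanSpace ℝ (Fin d), G n t ‖x‖
      = Real.sqrt (1 + t^2) ^ d * ∫ x : EuclideanSpace ℝ (Fin d), G n 0 ‖x‖ := by
  set a := Real.sqrt (1 + t^2) with ha
  have ha0 : 0 < a := sqt_pos t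
  have h1 : ∀ x : EuclideanSpace ℝ (Fin d), G n t ‖x‖ = G n 0 ‖a⁻¹ • x‖ := by
    intro x
    rw [G_scale n t ‖x‖, norm_smul, Real.norm_eq_abs, abs_of_nonneg (by positivity), div_eq_inv_mul]
  simp_rw [h1]
  rw [MeasureTheory.Measure.integral_comp_inv_smul_of_nonneg
    (volume : Measure (EuclideanSpace ℝ (Fin d)))
    (fun x : EuclideanSpace ℝ (Fin d) => G n 0 ‖x‖) (le_of_lt ha0)]
  rw [finrank_eucl, smul_eq_mul]

end measure

section conv

variable {d n : ℕ}

lemma G_conv_pointwise (n : ℕ) (t : ℝ) (x y : EuclideanSpace ℝ (Fin d)) :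
    G n t ‖y‖ * G n t ‖x - y‖ ≤ 2 ^ n * G n t ‖x‖ * (G n t ‖y‖ + G n t ‖x - y‖) := by
  have htri : ‖x‖ ≤ ‖y‖ + ‖x - y‖ := by
    calc ‖x‖ = ‖y + (x - y)‖ := by congr 1; abel
      _ ≤ ‖y‖ + ‖x - y‖ := norm_add_le _ _
  have g1 : 0 ≤ G n t ‖y‖ := G_nonneg n t (norm_nonneg y)
  have g2 : 0 ≤ G n t ‖x - y‖ := G_nonneg n t (norm_nonneg _)
  rcases le_or_gt (‖x‖ / 2) ‖y‖ with h | h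
  · have hb : G n t ‖y‖ ≤ 2 ^ n * G n t ‖x‖ := G_half n t (norm_nonneg x) h
    nlinarith [mul_le_mul_of_nonneg_right hb g2, mul_nonneg (mul_nonneg (le_of_lt (pow_pos (by norm_num : (0:ℝ) < 2) n)) (G_nonneg n t (norm_nonneg x))) g1]
  · have h2 : ‖x‖ / 2 ≤ ‖x - y‖ := by linarith
    have hb : G n t ‖x - y‖ ≤ 2 ^ n * G n t ‖x‖ := G_half n t (norm_nonneg x) h2
    nlinarith [mul_le_mul_of_nonneg_left hb g1, mul_nonneg (mul_nonneg (le_of_lt (pow_pos (by norm_num : (0:ℝ) < 2) n)) (G_nonneg n t (norm_nonneg x))) g2]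

lemma GG_integrable (d n : ℕ) (hd : 1 ≤ d) (hn : d < n) (t : ℝ)
    (x : EuclideanSpace ℝ (Fin d)) :
    Integrable (fun y => G n t ‖y‖ * G n t ‖x - y‖) := by
  refine ((G_integrable d n hd hn t).comp_sub_left x).mono ?_ ?_
  · exact ((G_meas d n t).mul ((G_meas d n t).comp (measurable_const.sub measurable_id))).aestronglyMeasurable
  · filter_upwards with y
    have g1 : 0 ≤ G n t ‖y‖ := G_nonneg n t (norm_nonneg y)
    have g2 : 0 ≤ G n t ‖x - y‖ := G_nonneg n t (norm_nonneg _)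
    rw [Real.norm_eq_abs, Real.norm_eq_abs, abs_of_nonneg (mul_nonneg g1 g2), abs_of_nonneg g2]
    calc G n t ‖y‖ * G n t ‖x - y‖ ≤ 1 * G n t ‖x - y‖ :=
          mul_le_mul_of_nonneg_right (G_le_one n t _) g2
      _ = G n t ‖x - y‖ := one_mul _

lemma conv_le (d n : ℕ) (hd : 1 ≤ d) (hn : d < n) (t : ℝ) (x : EuclideanSpace ℝ (Fin d)) :
    ∫ y, G n t ‖y‖ * G n t ‖x - y‖
      ≤ 2 ^ (n+1) * (Real.sqrt (1 + t^2) ^ d * ∫ z : EuclideanSpace ℝ (Fin d), G n 0 ‖z‖)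
          * G n t ‖x‖ := by
  have hGi := G_integrable d n hd hn t
  have hGi' := hGi.comp_sub_left x
  have hg : Integrable (fun y : EuclideanSpace ℝ (Fin d) =>
      2 ^ n * G n t ‖x‖ * (G n t ‖y‖ + G n t ‖x - y‖)) := (hGi.add hGi').const_mul _
  have h1 : ∫ y, G n t ‖y‖ * G n t ‖x - y‖
      ≤ ∫ y, 2 ^ n * G n t ‖x‖ * (G n t ‖y‖ + G n t ‖x - y‖) := by
    refine integral_mono_of_nonneg ?_ hg ?_
    · filter_upwards with y
      exact mul_nonneg (G_nonneg n t (norm_nonneg y)) (G_nonneg n t (norm_nonneg _))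
    · filter_upwards with y
      exact G_conv_pointwise n t x y
  have h2 : ∫ y, 2 ^ n * G n t ‖x‖ * (G n t ‖y‖ + G n t ‖x - y‖)
      = 2 ^ n * G n t ‖x‖ * ((∫ y : EuclideanSpace ℝ (Fin d), G n t ‖y‖)
          + ∫ y : EuclideanSpace ℝ (Fin d), G n t ‖x - y‖) := by
    rw [MeasureTheory.integral_const_mul, integral_add hGi hGi']
  have h3 : (∫ y : EuclideanSpace ℝ (Fin d), G n t ‖x - y‖)
      = ∫ y : EuclideanSpace ℝ (Fin d), G n t ‖y‖ :=
    integral_sub_left_eq_self (fun y : EuclideanSpace ℝ (Fin d) => G n t ‖y‖) volume x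
  refine le_trans h1 ?_
  rw [h2, h3, ← G_integral_eq d n t]
  ring_nf
  exact le_of_eq (by ring)

lemma iterConv_nonneg (d n : ℕ) (t : ℝ) : ∀ (k : ℕ) (x : EuclideanSpace ℝ (Fin d)),
    0 ≤ iterConv d n t k x
  | 0, x => G_nonneg n t (norm_nonneg x)
  | (k+1), x => integral_nonneg fun y =>
      mul_nonneg (iterConv_nonneg d n t k y) (G_nonneg n t (norm_nonneg _))

end conv

/-- decay of iterated convolutions of `G_{n,t}`;
`iterConv d n t (k-1)` is the `k`-fold convolution `G_{n,t}^{∗k}` for `k ≥ 1`. -/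
theorem stmt9 (d n : ℕ) (hd : 1 ≤ d) (hn : d < n) :
    ∃ C : ℝ, 0 < C ∧ ∀ (t : ℝ) (k : ℕ) (x : EuclideanSpace ℝ (Fin d)),
      iterConv d n t k x ≤ C ^ k * Real.sqrt (1 + t^2) ^ (k * d) * G n t ‖x‖ := by
  set I := ∫ z : EuclideanSpace ℝ (Fin d), G n 0 ‖z‖ with hIdef
  have hI : 0 ≤ I := integral_nonneg fun z => G_nonneg n 0 (norm_nonneg z)
  refine ⟨2 ^ (n+1) * I + 1, by positivity, ?_⟩
  set C := (2:ℝ) ^ (n+1) * I + 1 with hCdef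
  have hC0 : 0 ≤ C := by positivity
  intro t k
  set a := Real.sqrt (1 + t^2) with ha
  have ha0 : 0 < a := sqt_pos t
  induction k with
  | zero =>
    intro x
    show G n t ‖x‖ ≤ C ^ 0 * a ^ (0 * d) * G n t ‖x‖
    simp
  | succ k ih =>
    intro x
    set K := C ^ k * a ^ (k * d) with hK
    have hK0 : 0 ≤ K := by positivity
    have step1 : iterConv d n t (k+1) x ≤ ∫ y, K * (G n t ‖y‖ * G n t ‖x - y‖) := by
      show (∫ y, iterConv d n t k y * G n t ‖x - y‖) ≤ _
      refine integral_mono_of_nonneg ?_ ((GG_integrable d n hd hn t x).const_mul K) ?_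
      · filter_upwards with y
        exact mul_nonneg (iterConv_nonneg d n t k y) (G_nonneg n t (norm_nonneg _))
      · filter_upwards with y
        calc iterConv d n t k y * G n t ‖x - y‖
            ≤ (K * G n t ‖y‖) * G n t ‖x - y‖ :=
              mul_le_mul_of_nonneg_right (ih y) (G_nonneg n t (norm_nonneg _))
          _ = K * (G n t ‖y‖ * G n t ‖x - y‖) := by ring
    have step2 : (∫ y, K * (G n t ‖y‖ * G n t ‖x - y‖))
        ≤ K * (2 ^ (n+1) * (a ^ d * I) * G n t ‖x‖) := by
      rw [MeasureTheory.integral_const_mul]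
      exact mul_le_mul_of_nonneg_left (conv_le d n hd hn t x) hK0
    refine le_trans step1 (le_trans step2 ?_)
    have hgx : 0 ≤ G n t ‖x‖ := G_nonneg n t (norm_nonneg x)
    have hbd : 2 ^ (n+1) * I ≤ C := by rw [hCdef]; linarith
    calc K * (2 ^ (n+1) * (a ^ d * I) * G n t ‖x‖)
        = K * ((2 ^ (n+1) * I) * (a ^ d * G n t ‖x‖)) := by ring
      _ ≤ K * (C * (a ^ d * G n t ‖x‖)) := by
          refine mul_le_mul_of_nonneg_left
            (mul_le_mul_of_nonneg_right hbd (by positivity)) hK0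
      _ = C ^ (k+1) * a ^ ((k+1) * d) * G n t ‖x‖ := by
          rw [hK, pow_succ, show (k+1) * d = k * d + d by ring, pow_add]
          ring
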